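/- For any random variables K_S, K_T, A_S, A_T, X^N (finitely valued), if A := (A_S, A_T, X_{(S∪T)^c}^N) with A_{S∪T} = (A_S, A_T), and (A_S, A_T, X^N_{(S∪T)^c}) is a function of (A_S, X^N_{S^c}) and (A_T, A_S, X^N_{(S∪T)^c}, K_S) is a function of (A_T, X^N_{T^c}), then I(K_{S∪T}; A_{S∪T}, X^N_{(S∪T)^c}) ≤ I(K_S; A_S, X^N_{S^c}) + I(K_T; A_T, X^N_{T^c}), where K_{S∪T} = (K_S, K_T). -/
import Mathlib


noncomputable section
open Finset
open scoped Classical BigOperators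

/-- Probability of an event under a pmf on a finite sample space. -/
def Pr {Ω : Type} [Fintype Ω] (p : Ω → ℝ) (E : Ω → Prop) : ℝ :=
  ∑ ω : Ω, if E ω then p ω else 0

/-- `p` is a probability mass function. -/
def IsPMF {Ω : Type} [Fintype Ω] (p : Ω → ℝ) : Prop :=
  (∀ ω, 0 ≤ p ω) ∧ (∑ ω : Ω, p ω) = 1

/-- Shannon entropy of a finitely-valued random variable `X` under pmf `p`. -/
def ent {Ω α : Type} [Fintype Ω] [Fintype α] (p : Ω → ℝ) (X : Ω → α) : ℝ :=
  -∑ a : α, Pr p (fun ω => X ω = a) * Real.log (Pr p (fun ω => X ω = a))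

/-- Conditional Shannon entropy `H(X|Y)`. -/
def condEnt {Ω α β : Type} [Fintype Ω] [Fintype α] [Fintype β]
    (p : Ω → ℝ) (X : Ω → α) (Y : Ω → β) : ℝ :=
  ent p (fun ω => (X ω, Y ω)) - ent p Y

/-- Mutual information `I(X;Y)`. -/
def mi {Ω α β : Type} [Fintype Ω] [Fintype α] [Fintype β]
    (p : Ω → ℝ) (X : Ω → α) (Y : Ω → β) : ℝ :=
  ent p X + ent p Y - ent p (fun ω => (X ω, Y ω))

/-- Conditional mutual information `I(X;Y|Z)`. -/
def cmi {Ω α β γ : Type} [Fintype Ω] [Fintype α] [Fintype β] [Fintype γ]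
    (p : Ω → ℝ) (X : Ω → α) (Y : Ω → β) (Z : Ω → γ) : ℝ :=
  ent p (fun ω => (X ω, Z ω)) + ent p (fun ω => (Y ω, Z ω))
    - ent p (fun ω => (X ω, Y ω, Z ω)) - ent p Z

/-- `X` and `Y` are conditionally independent given `Z` (Markov chain `X - Z - Y`). -/
def CondIndep {Ω α β γ : Type} [Fintype Ω] [Fintype α] [Fintype β] [Fintype γ]
    (p : Ω → ℝ) (X : Ω → α) (Y : Ω → β) (Z : Ω → γ) : Prop :=
  ∀ (a : α) (b : β) (c : γ),
    Pr p (fun ω => X ω = a ∧ Y ω = b ∧ Z ω = c) * Pr p (fun ω => Z ω = c)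
      = Pr p (fun ω => X ω = a ∧ Z ω = c) * Pr p (fun ω => Y ω = b ∧ Z ω = c)

/-- The tuple random variable `X_S = (X_l)_{l ∈ S}`. -/
def XS {Ω L 𝒳 : Type} [Fintype Ω] (X : L → Ω → 𝒳) (S : Finset L) :
    Ω → (S → 𝒳) :=
  fun ω i => X i ω

/-- The value function of the secret-key generation game:
`v(S) = I(X_S; X_0 | X_{L\S})`. -/
def vGame {Ω L 𝒳 β : Type} [Fintype Ω] [Fintype L] [DecidableEq L] [Fintype 𝒳] [Fintype β]
    (p : Ω → ℝ) (X : L → Ω → 𝒳) (X0 : Ω → β) (S : Finset L) : ℝ :=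
  cmi p (XS X S) X0 (XS X Sᶜ)


lemma Pr_nonneg {Ω : Type} [Fintype Ω] {p : Ω → ℝ} (hp0 : ∀ ω, 0 ≤ p ω)
    (E : Ω → Prop) : 0 ≤ Pr p E := by
  apply Finset.sum_nonneg; intro ω _
  split
  · exact hp0 ω
  · exact le_refl 0

lemma Pr_congr {Ω : Type} [Fintype Ω] {p : Ω → ℝ} {E F : Ω → Prop}
    (h : ∀ ω, E ω ↔ F ω) : Pr p E = Pr p F := by
  unfold Pr
  exact Finset.sum_congr rfl fun ω _ => by simp [h ω]

lemma Pr_marg {Ω δ : Type} [Fintype Ω] [Fintype δ] (p : Ω → ℝ) (W : Ω → δ)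
    (E : Ω → Prop) : (∑ d, Pr p (fun ω => W ω = d ∧ E ω)) = Pr p E := by
  unfold Pr
  rw [Finset.sum_comm]
  refine Finset.sum_congr rfl fun ω _ => ?_
  by_cases hE : E ω <;> simp [hE]

lemma Pr_true {Ω : Type} [Fintype Ω] {p : Ω → ℝ} (hp1 : (∑ ω : Ω, p ω) = 1) :
    Pr p (fun _ => True) = 1 := by
  unfold Pr; simpa using hp1

lemma cmi_nonneg {Ω α β γ : Type} [Fintype Ω] [Fintype α] [Fintype β] [Fintype γ]
    (p : Ω → ℝ) (hp : IsPMF p) (X : Ω → α) (Y : Ω → β) (Z : Ω → γ) :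
    0 ≤ cmi p X Y Z := by
  obtain ⟨hp0, hp1⟩ := hp
  set q : α → β → γ → ℝ := fun a b c => Pr p (fun ω => X ω = a ∧ Y ω = b ∧ Z ω = c) with hq
  have hq0 : ∀ a b c, 0 ≤ q a b c := fun a b c => Pr_nonneg hp0 _
  -- marginals
  have hXZ : ∀ a c, Pr p (fun ω => X ω = a ∧ Z ω = c) = ∑ b, q a b c := by
    intro a c
    rw [← Pr_marg p Y (fun ω => X ω = a ∧ Z ω = c)]
    exact Finset.sum_congr rfl fun b _ => (Pr_congr (fun ω => by tauto)).symm
  have hYZ : ∀ b c, Pr p (fun ω => Y ω = b ∧ Z ω = c) = ∑ a, q a b c := by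
    intro b c
    rw [← Pr_marg p X (fun ω => Y ω = b ∧ Z ω = c)]
  have hZm : ∀ c, Pr p (fun ω => Z ω = c) = ∑ a, ∑ b, q a b c := by
    intro c
    rw [← Pr_marg p X (fun ω => Z ω = c)]
    exact Finset.sum_congr rfl fun a _ => hXZ a c
  have hsumZ : (∑ c, ∑ a, ∑ b, q a b c) = 1 := by
    have h2 : (∑ c, Pr p (fun ω => Z ω = c ∧ True)) = Pr p (fun _ => True) :=
      Pr_marg p Z _
    rw [Pr_true hp1] at h2
    calc (∑ c, ∑ a, ∑ b, q a b c)
        = ∑ c, Pr p (fun ω => Z ω = c ∧ True) :=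
          Finset.sum_congr rfl fun c _ => by
            rw [← hZm]; exact Pr_congr fun ω => by tauto
      _ = 1 := h2
  have hsumq : (∑ a, ∑ b, ∑ c, q a b c) = 1 := by
    have h3 : (∑ a, ∑ b, ∑ c, q a b c) = ∑ a, ∑ c, ∑ b, q a b c :=
      Finset.sum_congr rfl fun a _ => Finset.sum_comm
    rw [h3, Finset.sum_comm, hsumZ]
  -- nonneg of marginals
  have hXZ0 : ∀ a c, 0 ≤ ∑ b, q a b c := fun a c =>
    Finset.sum_nonneg fun b _ => hq0 a b c
  have hYZ0 : ∀ b c, 0 ≤ ∑ a, q a b c := fun b c =>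
    Finset.sum_nonneg fun a _ => hq0 a b c
  have hZ0 : ∀ c, 0 ≤ ∑ a, ∑ b, q a b c := fun c =>
    Finset.sum_nonneg fun a _ => hXZ0 a c
  -- entropies in terms of q
  have eXZ : ent p (fun ω => (X ω, Z ω))
      = -∑ a, ∑ c, (∑ b, q a b c) * Real.log (∑ b, q a b c) := by
    unfold ent
    rw [Fintype.sum_prod_type]
    congr 1
    refine Finset.sum_congr rfl fun a _ => Finset.sum_congr rfl fun c _ => ?_
    rw [show Pr p (fun ω => (X ω, Z ω) = (a, c)) = Pr p (fun ω => X ω = a ∧ Z ω = c) from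
      Pr_congr fun ω => by simp [Prod.ext_iff], hXZ]
  have eYZ : ent p (fun ω => (Y ω, Z ω))
      = -∑ b, ∑ c, (∑ a, q a b c) * Real.log (∑ a, q a b c) := by
    unfold ent
    rw [Fintype.sum_prod_type]
    congr 1
    refine Finset.sum_congr rfl fun b _ => Finset.sum_congr rfl fun c _ => ?_
    rw [show Pr p (fun ω => (Y ω, Z ω) = (b, c)) = Pr p (fun ω => Y ω = b ∧ Z ω = c) from
      Pr_congr fun ω => by simp [Prod.ext_iff], hYZ]
  have eXYZ : ent p (fun ω => (X ω, Y ω, Z ω))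
      = -∑ a, ∑ b, ∑ c, q a b c * Real.log (q a b c) := by
    unfold ent
    rw [Fintype.sum_prod_type]
    congr 1
    refine Finset.sum_congr rfl fun a _ => ?_
    rw [Fintype.sum_prod_type]
    refine Finset.sum_congr rfl fun b _ => Finset.sum_congr rfl fun c _ => ?_
    rw [show Pr p (fun ω => (X ω, Y ω, Z ω) = (a, b, c))
        = Pr p (fun ω => X ω = a ∧ Y ω = b ∧ Z ω = c) from
      Pr_congr fun ω => by simp [Prod.ext_iff]]
  have eZ : ent p Z = -∑ c, (∑ a, ∑ b, q a b c) * Real.log (∑ a, ∑ b, q a b c) := by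
    unfold ent
    congr 1
    exact Finset.sum_congr rfl fun c _ => by rw [hZm]
  -- reindex to triple sums
  have A2 : (∑ a, ∑ c, (∑ b, q a b c) * Real.log (∑ b, q a b c))
      = ∑ a, ∑ b, ∑ c, q a b c * Real.log (∑ b', q a b' c) := by
    refine Finset.sum_congr rfl fun a _ => ?_
    rw [Finset.sum_comm]
    exact Finset.sum_congr rfl fun c _ => Finset.sum_mul _ _ _
  have B2 : (∑ b, ∑ c, (∑ a, q a b c) * Real.log (∑ a, q a b c))
      = ∑ a, ∑ b, ∑ c, q a b c * Real.log (∑ a', q a' b c) := by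
    calc (∑ b, ∑ c, (∑ a, q a b c) * Real.log (∑ a, q a b c))
        = ∑ b, ∑ c, ∑ a, q a b c * Real.log (∑ a', q a' b c) :=
          Finset.sum_congr rfl fun b _ => Finset.sum_congr rfl fun c _ =>
            Finset.sum_mul _ _ _
      _ = ∑ b, ∑ a, ∑ c, q a b c * Real.log (∑ a', q a' b c) :=
          Finset.sum_congr rfl fun b _ => Finset.sum_comm
      _ = ∑ a, ∑ b, ∑ c, q a b c * Real.log (∑ a', q a' b c) := Finset.sum_comm
  have D2 : (∑ c, (∑ a, ∑ b, q a b c) * Real.log (∑ a, ∑ b, q a b c))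
      = ∑ a, ∑ b, ∑ c, q a b c * Real.log (∑ a', ∑ b', q a' b' c) := by
    calc (∑ c, (∑ a, ∑ b, q a b c) * Real.log (∑ a, ∑ b, q a b c))
        = ∑ c, ∑ a, ∑ b, q a b c * Real.log (∑ a', ∑ b', q a' b' c) := by
          refine Finset.sum_congr rfl fun c _ => ?_
          rw [Finset.sum_mul]
          exact Finset.sum_congr rfl fun a _ => Finset.sum_mul _ _ _
      _ = ∑ a, ∑ c, ∑ b, q a b c * Real.log (∑ a', ∑ b', q a' b' c) := Finset.sum_comm
      _ = ∑ a, ∑ b, ∑ c, q a b c * Real.log (∑ a', ∑ b', q a' b' c) :=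
          Finset.sum_congr rfl fun a _ => Finset.sum_comm
  -- cmi as single triple sum
  have ecmi : cmi p X Y Z = ∑ a, ∑ b, ∑ c,
      q a b c * (Real.log (q a b c) + Real.log (∑ a', ∑ b', q a' b' c)
        - Real.log (∑ b', q a b' c) - Real.log (∑ a', q a' b c)) := by
    unfold cmi
    rw [eXZ, eYZ, eXYZ, eZ, A2, B2, D2]
    simp only [mul_add, mul_sub, Finset.sum_add_distrib, Finset.sum_sub_distrib]
    ring
  rw [ecmi]
  set r : α → β → γ → ℝ := fun a b c =>
    (∑ b', q a b' c) * (∑ a', q a' b c) / (∑ a', ∑ b', q a' b' c) with hr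
  have hr0 : ∀ a b c, 0 ≤ r a b c := fun a b c =>
    div_nonneg (mul_nonneg (hXZ0 a c) (hYZ0 b c)) (hZ0 c)
  have hterm : ∀ a b c, q a b c - r a b c ≤
      q a b c * (Real.log (q a b c) + Real.log (∑ a', ∑ b', q a' b' c)
        - Real.log (∑ b', q a b' c) - Real.log (∑ a', q a' b c)) := by
    intro a b c
    rcases eq_or_lt_of_le (hq0 a b c) with hqz | hqpos
    · rw [← hqz]
      simpa using hr0 a b c
    · have hXZp : 0 < ∑ b', q a b' c :=
        lt_of_lt_of_le hqpos (Finset.single_le_sum (fun b' _ => hq0 a b' c) (Finset.mem_univ b))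
      have hYZp : 0 < ∑ a', q a' b c :=
        lt_of_lt_of_le hqpos (Finset.single_le_sum (fun a' _ => hq0 a' b c) (Finset.mem_univ a))
      have hZp : 0 < ∑ a', ∑ b', q a' b' c :=
        lt_of_lt_of_le hXZp (Finset.single_le_sum (fun a' _ => hXZ0 a' c) (Finset.mem_univ a))
      have hrpos : 0 < r a b c := by
        simp only [hr]
        exact div_pos (mul_pos hXZp hYZp) hZp
      have hlog : Real.log (r a b c / q a b c)
          = Real.log (∑ b', q a b' c) + Real.log (∑ a', q a' b c)
            - Real.log (∑ a', ∑ b', q a' b' c) - Real.log (q a b c) := by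
        rw [Real.log_div (ne_of_gt hrpos) (ne_of_gt hqpos)]
        simp only [hr]
        rw [Real.log_div (by positivity) (ne_of_gt hZp),
          Real.log_mul (ne_of_gt hXZp) (ne_of_gt hYZp)]
      have hle : Real.log (r a b c / q a b c) ≤ r a b c / q a b c - 1 :=
        Real.log_le_sub_one_of_pos (div_pos hrpos hqpos)
      have h2 : q a b c * Real.log (r a b c / q a b c) ≤ r a b c - q a b c := by
        have h4 := mul_le_mul_of_nonneg_left hle (le_of_lt hqpos)
        have heq : q a b c * (r a b c / q a b c - 1) = r a b c - q a b c := by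
          field_simp
        linarith [h4]
      rw [hlog] at h2
      nlinarith [h2]
  have hsumr : (∑ a, ∑ b, ∑ c, r a b c) ≤ 1 := by
    have hinner : ∀ c, (∑ a, ∑ b, r a b c) ≤ ∑ a', ∑ b', q a' b' c := by
      intro c
      have hb : ∀ a, (∑ b, r a b c)
          = (∑ b', q a b' c) * (∑ a', ∑ b', q a' b' c) / (∑ a', ∑ b', q a' b' c) := by
        intro a
        simp only [hr]
        rw [← Finset.sum_div, ← Finset.mul_sum]
        congr 2
        exact Finset.sum_comm
      rcases eq_or_lt_of_le (hZ0 c) with h0 | hpos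
      · simp only [hb, ← h0]
        simp
      · have hstep : (∑ a, ∑ b, r a b c) = ∑ a, (∑ b', q a b' c) := by
          refine Finset.sum_congr rfl fun a _ => ?_
          rw [hb a, mul_div_assoc, div_self (ne_of_gt hpos), mul_one]
        rw [hstep]
    have h3 : (∑ a, ∑ b, ∑ c, r a b c) = ∑ a, ∑ c, ∑ b, r a b c :=
      Finset.sum_congr rfl fun a _ => Finset.sum_comm
    have h4 : (∑ a, ∑ b, ∑ c, r a b c) = ∑ c, ∑ a, ∑ b, r a b c := by
      rw [h3, Finset.sum_comm]
    rw [h4, ← hsumZ]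
    exact Finset.sum_le_sum fun c _ => hinner c
  have hmain : (∑ a, ∑ b, ∑ c, (q a b c - r a b c)) ≤ ∑ a, ∑ b, ∑ c,
      q a b c * (Real.log (q a b c) + Real.log (∑ a', ∑ b', q a' b' c)
        - Real.log (∑ b', q a b' c) - Real.log (∑ a', q a' b c)) :=
    Finset.sum_le_sum fun a _ => Finset.sum_le_sum fun b _ =>
      Finset.sum_le_sum fun c _ => hterm a b c
  have hsub : (∑ a, ∑ b, ∑ c, (q a b c - r a b c))
      = (∑ a, ∑ b, ∑ c, q a b c) - ∑ a, ∑ b, ∑ c, r a b c := by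
    simp only [Finset.sum_sub_distrib]
  rw [hsub, hsumq] at hmain
  linarith

lemma ent_comp {Ω α β : Type} [Fintype Ω] [Fintype α] [Fintype β]
    (p : Ω → ℝ) (Y : Ω → β) (Z : Ω → α) (e : β → α) (he : Function.Injective e)
    (hZ : ∀ ω, Z ω = e (Y ω)) : ent p Z = ent p Y := by
  have h1 : ∀ y, Pr p (fun ω => Z ω = e y) = Pr p (fun ω => Y ω = y) := by
    intro y; unfold Pr; apply Finset.sum_congr rfl; intro ω _
    simp only [hZ ω, he.eq_iff]
  have h2 : ∀ a, a ∉ Finset.univ.image e → Pr p (fun ω => Z ω = a) = 0 := by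
    intro a ha; unfold Pr
    apply Finset.sum_eq_zero; intro ω _
    rw [if_neg]; intro h; apply ha; rw [← h, hZ ω]
    exact Finset.mem_image_of_mem e (Finset.mem_univ _)
  unfold ent; congr 1
  rw [← Finset.sum_subset (Finset.subset_univ (Finset.univ.image e))
      (fun a _ ha => by rw [h2 a ha]; simp),
    Finset.sum_image (fun y _ y' _ h => he h)]
  exact Finset.sum_congr rfl fun y _ => by rw [h1]

lemma ent_unit {Ω : Type} [Fintype Ω] (p : Ω → ℝ) (hp : IsPMF p) :
    ent p (fun _ : Ω => ()) = 0 := by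
  unfold ent Pr
  simp [hp.2]

lemma mi_nonneg {Ω α β : Type} [Fintype Ω] [Fintype α] [Fintype β]
    (p : Ω → ℝ) (hp : IsPMF p) (X : Ω → α) (Y : Ω → β) : 0 ≤ mi p X Y := by
  have h := cmi_nonneg p hp X Y (fun _ => ())
  unfold cmi at h
  rw [ent_unit p hp,
    ent_comp p X (fun ω => (X ω, ())) (fun x => (x, ()))
      (fun x y h => congrArg Prod.fst h) (fun ω => rfl),
    ent_comp p Y (fun ω => (Y ω, ())) (fun y => (y, ()))
      (fun x y h => congrArg Prod.fst h) (fun ω => rfl),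
    ent_comp p (fun ω => (X ω, Y ω)) (fun ω => (X ω, Y ω, ()))
      (fun t => (t.1, t.2, ()))
      (fun t t' h => by
        cases t; cases t'
        simpa [Prod.ext_iff] using h)
      (fun ω => rfl)] at h
  unfold mi
  linarith

lemma dpi {Ω α β γ : Type} [Fintype Ω] [Fintype α] [Fintype β] [Fintype γ]
    (p : Ω → ℝ) (hp : IsPMF p) (X : Ω → α) (Y : Ω → β) (Zc : Ω → γ)
    (g : β → γ) (hg : ∀ ω, Zc ω = g (Y ω)) : mi p X Zc ≤ mi p X Y := by
  have h := cmi_nonneg p hp X Y Zc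
  unfold cmi at h
  rw [ent_comp p Y (fun ω => (Y ω, Zc ω)) (fun y => (y, g y))
      (fun x y h => congrArg Prod.fst h) (fun ω => by simp only [hg ω]),
    ent_comp p (fun ω => (X ω, Y ω)) (fun ω => (X ω, Y ω, Zc ω))
      (fun t => (t.1, t.2, g t.2))
      (fun t t' h => by
        cases t; cases t'
        simp only [Prod.mk.injEq] at h
        simp [Prod.ext_iff, h.1, h.2.1])
      (fun ω => by simp only [hg ω])] at h
  unfold mi
  linarith

lemma ent_swap {Ω α β : Type} [Fintype Ω] [Fintype α] [Fintype β]
    (p : Ω → ℝ) (X : Ω → α) (Y : Ω → β) :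
    ent p (fun ω => (Y ω, X ω)) = ent p (fun ω => (X ω, Y ω)) :=
  ent_comp p (fun ω => (X ω, Y ω)) (fun ω => (Y ω, X ω)) Prod.swap
    Prod.swap_injective (fun ω => rfl)

lemma mi_chain {Ω α β γ : Type} [Fintype Ω] [Fintype α] [Fintype β] [Fintype γ]
    (p : Ω → ℝ) (X : Ω → α) (Y : Ω → β) (Z : Ω → γ) :
    mi p (fun ω => (X ω, Y ω)) Z = mi p X Z + cmi p Y Z X := by
  have h1 : ent p (fun ω => (Y ω, X ω)) = ent p (fun ω => (X ω, Y ω)) := ent_swap p X Y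
  have h2 : ent p (fun ω => (Z ω, X ω)) = ent p (fun ω => (X ω, Z ω)) := ent_swap p X Z
  have h3 : ent p (fun ω => (Y ω, Z ω, X ω)) = ent p (fun ω => ((X ω, Y ω), Z ω)) :=
    ent_comp p (fun ω => ((X ω, Y ω), Z ω)) (fun ω => (Y ω, Z ω, X ω))
      (fun t => (t.1.2, t.2, t.1.1))
      (fun t t' h => by
        cases' t with t1 t2; cases' t' with t1' t2'; cases t1; cases t1'
        simp only [Prod.mk.injEq] at h
        simp [Prod.ext_iff, h.1, h.2.1, h.2.2])
      (fun ω => rfl)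
  unfold mi cmi
  rw [h1, h2, h3]
  ring

lemma cmi_le_mi {Ω α β γ : Type} [Fintype Ω] [Fintype α] [Fintype β] [Fintype γ]
    (p : Ω → ℝ) (hp : IsPMF p) (X : Ω → α) (Y : Ω → β) (Z : Ω → γ) :
    cmi p X Y Z ≤ mi p X (fun ω => (Y ω, Z ω)) := by
  have h := mi_nonneg p hp X Z
  unfold mi cmi at *
  linarith


/-- the key mutual-information chain inequality: if
`(A_S, A_T, X^N_{(S∪T)^c})` is a function of `(A_S, X^N_{S^c})` and
`(A_T, A_S, X^N_{(S∪T)^c}, K_S)` is a function of `(A_T, X^N_{T^c})`, then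
`I(K_{S∪T}; A_{S∪T}, X^N_{(S∪T)^c}) ≤ I(K_S; A_S, X^N_{S^c}) + I(K_T; A_T, X^N_{T^c})`. -/
theorem statement19 {Ω κ₁ κ₂ α₁ α₂ β₁ β₂ β₃ : Type} [Fintype Ω] [Fintype κ₁] [Fintype κ₂]
    [Fintype α₁] [Fintype α₂] [Fintype β₁] [Fintype β₂] [Fintype β₃]
    (p : Ω → ℝ) (hp : IsPMF p)
    (KS : Ω → κ₁) (KT : Ω → κ₂) (AS : Ω → α₁) (AT : Ω → α₂)
    (XSc : Ω → β₁) (XTc : Ω → β₂) (XSTc : Ω → β₃)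
    (h1 : ∃ g : α₁ × β₁ → α₁ × α₂ × β₃, ∀ ω, g (AS ω, XSc ω) = (AS ω, AT ω, XSTc ω))
    (h2 : ∃ h : α₂ × β₂ → α₂ × α₁ × β₃ × κ₁,
      ∀ ω, h (AT ω, XTc ω) = (AT ω, AS ω, XSTc ω, KS ω)) :
    mi p (fun ω => (KS ω, KT ω)) (fun ω => (AS ω, AT ω, XSTc ω))
      ≤ mi p KS (fun ω => (AS ω, XSc ω)) + mi p KT (fun ω => (AT ω, XTc ω)) := by
  obtain ⟨g, hg⟩ := h1
  obtain ⟨h, hh⟩ := h2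
  have step1 : mi p (fun ω => (KS ω, KT ω)) (fun ω => (AS ω, AT ω, XSTc ω))
      = mi p KS (fun ω => (AS ω, AT ω, XSTc ω))
        + cmi p KT (fun ω => (AS ω, AT ω, XSTc ω)) KS :=
    mi_chain p KS KT _
  have step2 : mi p KS (fun ω => (AS ω, AT ω, XSTc ω))
      ≤ mi p KS (fun ω => (AS ω, XSc ω)) :=
    dpi p hp KS (fun ω => (AS ω, XSc ω)) _ g (fun ω => (hg ω).symm)
  have step3 : cmi p KT (fun ω => (AS ω, AT ω, XSTc ω)) KS
      ≤ mi p KT (fun ω => ((AS ω, AT ω, XSTc ω), KS ω)) :=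
    cmi_le_mi p hp KT _ KS
  have step4 : mi p KT (fun ω => ((AS ω, AT ω, XSTc ω), KS ω))
      ≤ mi p KT (fun ω => (AT ω, XTc ω)) := by
    refine dpi p hp KT (fun ω => (AT ω, XTc ω)) _
      (fun w => (((h w).2.1, (h w).1, (h w).2.2.1), (h w).2.2.2)) fun ω => ?_
    simp only [hh ω]
  linarith
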